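/- Let f be a polynomial with Newton polytope equal to Δ_{n,2d}, full support L_{n,2d} = Δ_{n,2d} ∩ ℤ^n, written as f = Σ_{j=1}^s f_j where each f_j is a circuit polynomial with vertices among {0, 2d·e_1,…,2d·e_n}, distinct inner exponent β(j), and inner coefficient strictly smaller in absolute value than its circuit number: |f_{β(j)}| < Θ(f_j). Let g ∈ P_{n,2d} be any nonnegative polynomial of degree ≤ 2d. Set δ = min_j (Θ(f_j) − |f_{β(j)}|) and ε = min over non-vertex exponents α with g_α ≠ 0 of δ/(2|g_α|). Then f + ε·g is a sum of nonnegative circuit polynomials. -/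

import Mathlib

open MvPolynomial

/-- A circuit polynomial in `n` variables, supported in the scaled standard simplex
`Δ_{n,2d}`. -/
def IsCircuit (n d : ℕ) (p : MvPolynomial (Fin n) ℝ) : Prop :=
  ∃ (r : ℕ) (α : Fin (r + 1) → Fin n → ℕ) (β : Fin n → ℕ)
    (c : Fin (r + 1) → ℝ) (cβ : ℝ) (lam : Fin (r + 1) → ℝ),
    r ≤ n ∧
    (∀ j i, Even (α j i)) ∧
    AffineIndependent ℝ (fun j => (fun i => (α j i : ℝ)) : Fin (r + 1) → Fin n → ℝ) ∧
    (∀ j, 0 < c j) ∧ (∀ j, 0 < lam j) ∧ (∑ j, lam j = 1) ∧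
    (∀ i, (β i : ℝ) = ∑ j, lam j * (α j i : ℝ)) ∧
    (∀ j, ∑ i, α j i ≤ 2 * d) ∧
    p = (∑ j, monomial (Finsupp.equivFunOnFinite.symm (α j)) (c j))
          + monomial (Finsupp.equivFunOnFinite.symm β) cβ

/-- A sum of nonnegative circuit polynomials, all supported in `Δ_{n,2d}`. -/
def IsSONC (n d : ℕ) (p : MvPolynomial (Fin n) ℝ) : Prop :=
  ∃ (k : ℕ) (q : Fin k → MvPolynomial (Fin n) ℝ),
    (∀ i, IsCircuit n d (q i)) ∧
    (∀ i (x : Fin n → ℝ), 0 ≤ eval x (q i)) ∧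
    p = ∑ i, q i



-- univariate slice: coeff of the slice polynomial
lemma slice_coeff {n : ℕ} (g : MvPolynomial (Fin n) ℝ) (i : Fin n) (N : ℕ) :
    (MvPolynomial.eval₂ (Polynomial.C : ℝ →+* Polynomial ℝ)
      (fun m => if m = i then Polynomial.X else 0) g).coeff N = g.coeff (Finsupp.single i N) := by
  classical
  rw [MvPolynomial.eval₂_eq']
  have hprod : ∀ a : Fin n →₀ ℕ,
      (∏ m, (if m = i then (Polynomial.X : Polynomial ℝ) else 0) ^ a m)
        = if a = Finsupp.single i (a i) then Polynomial.X ^ (a i) else 0 := by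
    intro a
    by_cases ha : a = Finsupp.single i (a i)
    · rw [if_pos ha]
      rw [Finset.prod_eq_single i]
      · simp
      · intro m _ hm
        rw [if_neg hm]
        have : a m = 0 := by
          conv_lhs => rw [ha]
          simp [Finsupp.single_apply, Ne.symm hm]
        simp [this]
      · simp
    · rw [if_neg ha]
      have : ∃ m, m ≠ i ∧ a m ≠ 0 := by
        by_contra h
        push_neg at h
        apply ha
        ext m
        by_cases hm : m = i
        · subst hm; simp
        · rw [h m hm]
          simp [Finsupp.single_apply, Ne.symm hm]
      obtain ⟨m, hmi, hm⟩ := this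
      apply Finset.prod_eq_zero (Finset.mem_univ m)
      rw [if_neg hmi, zero_pow hm]
  rw [Polynomial.finset_sum_coeff]
  have : ∀ a ∈ g.support, (Polynomial.C (g.coeff a) *
      ∏ m, (if m = i then (Polynomial.X : Polynomial ℝ) else 0) ^ a m).coeff N
      = if a = Finsupp.single i N then g.coeff a else 0 := by
    intro a _
    rw [hprod, Polynomial.coeff_C_mul]
    by_cases ha : a = Finsupp.single i (a i)
    · rw [if_pos ha, Polynomial.coeff_X_pow]
      by_cases hN : a i = N
      · subst hN
        rw [if_pos rfl, if_pos ha, mul_one]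
      · rw [if_neg (fun h => hN h.symm), if_neg, mul_zero]
        intro h
        apply hN
        rw [h]; simp
    · rw [if_neg ha, Polynomial.coeff_zero, mul_zero, if_neg]
      intro h
      apply ha
      rw [h]; simp
  rw [Finset.sum_congr rfl this, Finset.sum_ite_eq' g.support (Finsupp.single i N)
    (fun a => g.coeff a)]
  by_cases h : Finsupp.single i N ∈ g.support
  · rw [if_pos h]
  · rw [if_neg h]
    exact (MvPolynomial.notMem_support_iff.mp h).symm

lemma slice_eval {n : ℕ} (g : MvPolynomial (Fin n) ℝ) (i : Fin n) (t : ℝ) :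
    (MvPolynomial.eval₂ (Polynomial.C : ℝ →+* Polynomial ℝ)
      (fun m => if m = i then Polynomial.X else 0) g).eval t
      = eval (fun m => if m = i then t else (0:ℝ)) g := by
  classical
  rw [show ((MvPolynomial.eval₂ (Polynomial.C : ℝ →+* Polynomial ℝ)
      (fun m => if m = i then Polynomial.X else 0) g).eval t)
      = Polynomial.evalRingHom t (MvPolynomial.eval₂ (Polynomial.C : ℝ →+* Polynomial ℝ)
      (fun m => if m = i then Polynomial.X else 0) g) from rfl,
    MvPolynomial.eval₂_comp_left]
  have h1 : (Polynomial.evalRingHom t).comp (Polynomial.C : ℝ →+* Polynomial ℝ) = RingHom.id ℝ := by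
    ext r; simp
  have h2 : (⇑(Polynomial.evalRingHom t) ∘ fun m => if m = i then Polynomial.X else 0)
      = fun m => if m = i then t else (0:ℝ) := by
    funext m; by_cases h : m = i <;> simp [h]
  rw [h1, h2]
  rfl

lemma coeff_vertex_nonneg {n d : ℕ} (hd : 1 ≤ d) (g : MvPolynomial (Fin n) ℝ)
    (hdeg : g.totalDegree ≤ 2 * d) (hnn : ∀ x : Fin n → ℝ, 0 ≤ eval x g) (i : Fin n) :
    0 ≤ g.coeff (Finsupp.single i (2 * d)) := by
  classical
  set P : Polynomial ℝ := MvPolynomial.eval₂ (Polynomial.C : ℝ →+* Polynomial ℝ)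
      (fun m => if m = i then Polynomial.X else 0) g with hP
  have hPdeg : P.natDegree ≤ 2 * d := by
    apply Polynomial.natDegree_le_iff_coeff_eq_zero.mpr
    intro N hN
    rw [slice_coeff]
    by_contra h
    have hsup : Finsupp.single i N ∈ g.support := MvPolynomial.mem_support_iff.mpr h
    have := MvPolynomial.le_totalDegree hsup
    rw [Finsupp.sum_single_index rfl] at this
    omega
  by_contra hlt
  push_neg at hlt
  have hcoeff : P.coeff (2 * d) = g.coeff (Finsupp.single i (2 * d)) := slice_coeff g i (2 * d)
  have hne : P.coeff (2 * d) ≠ 0 := by rw [hcoeff]; exact ne_of_lt hlt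
  have hnd : P.natDegree = 2 * d := by
    rcases lt_or_eq_of_le hPdeg with h | h
    · exact absurd (Polynomial.coeff_eq_zero_of_natDegree_lt h) hne
    · exact h
  have hP0 : P ≠ 0 := fun h => hne (by simp [h])
  have hdegpos : 0 < P.degree := by
    rw [Polynomial.degree_eq_natDegree hP0, hnd]
    exact_mod_cast by omega
  have hlc : P.leadingCoeff ≤ 0 := by
    rw [Polynomial.leadingCoeff, hnd, hcoeff]; exact le_of_lt hlt
  have htend := Polynomial.tendsto_atBot_of_leadingCoeff_nonpos P hdegpos hlc
  have : ∀ᶠ t in Filter.atTop, P.eval t < 0 :=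
    htend.eventually (Filter.eventually_lt_atBot 0)
  obtain ⟨t, ht⟩ := this.exists
  rw [slice_eval] at ht
  exact absurd (hnn _) (not_le.mpr ht)

lemma coeff_zero_nonneg {n : ℕ} (g : MvPolynomial (Fin n) ℝ)
    (hnn : ∀ x : Fin n → ℝ, 0 ≤ eval x g) : 0 ≤ g.coeff 0 := by
  have h := hnn 0
  rwa [MvPolynomial.eval_zero] at h

lemma circuit_eval_nonneg {n d r : ℕ} (σ : Fin r ↪ Fin n)
    (c : Fin (r+1) → ℝ) (hc : ∀ k, 0 < c k) (lam : Fin (r+1) → ℝ) (hlam : ∀ k, 0 < lam k)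
    (hsum : ∑ k, lam k = 1) (β : Fin n →₀ ℕ)
    (hβ1 : ∀ k : Fin r, ((β (σ k) : ℝ)) = 2 * d * lam k.succ)
    (hβ2 : ∀ i, (∀ k, σ k ≠ i) → β i = 0)
    (b' : ℝ) (hb : |b'| ≤ ∏ k, (c k / lam k) ^ (lam k)) (x : Fin n → ℝ) :
    0 ≤ eval x (C (c 0) + (∑ k : Fin r, monomial (Finsupp.single (σ k) (2*d)) (c k.succ))
        + monomial β b') := by
  classical
  set Θ : ℝ := ∏ k, (c k / lam k) ^ (lam k) with hΘ
  set y : Fin (r+1) → ℝ := Fin.cases 1 (fun k => x (σ k) ^ (2*d)) with hy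
  have hyn : ∀ k, 0 ≤ y k := by
    intro k
    induction k using Fin.cases with
    | zero => simp [hy]
    | succ k => simpa [hy] using (even_two_mul d).pow_nonneg (x (σ k))
  set M : ℝ := ∏ i, |x i| ^ (β i) with hM
  have hMn : 0 ≤ M := Finset.prod_nonneg fun i _ => pow_nonneg (abs_nonneg _) _
  -- AM-GM
  have hAM := Real.geom_mean_le_arith_mean_weighted Finset.univ lam
      (fun k => (c k / lam k) * y k) (fun k _ => (hlam k).le) hsum
      (fun k _ => mul_nonneg (div_nonneg (hc k).le (hlam k).le) (hyn k))
  have hprod : ∏ k, ((c k / lam k) * y k) ^ (lam k) = Θ * ∏ k, (y k) ^ (lam k) := by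
    rw [hΘ, ← Finset.prod_mul_distrib]
    exact Finset.prod_congr rfl fun k _ =>
      Real.mul_rpow (div_nonneg (hc k).le (hlam k).le) (hyn k)
  have hyM : ∏ k, (y k) ^ (lam k) = M := by
    rw [Fin.prod_univ_succ]
    have h0 : (y 0) ^ (lam 0) = 1 := by simp [hy]
    have hsucc : ∀ k : Fin r, (y k.succ) ^ (lam k.succ) = |x (σ k)| ^ (β (σ k)) := by
      intro k
      have h1 : y k.succ = |x (σ k)| ^ (2*d) := by
        simp only [hy, Fin.cases_succ]
        exact ((even_two_mul d).pow_abs (x (σ k))).symm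
      rw [h1, ← Real.rpow_natCast |x (σ k)| (2*d), ← Real.rpow_mul (abs_nonneg _),
        ← Real.rpow_natCast |x (σ k)| (β (σ k))]
      congr 1
      rw [hβ1 k]
      push_cast
      ring
    rw [h0, one_mul, Finset.prod_congr rfl (fun k _ => hsucc k)]
    -- now ∏ k : Fin r, |x (σ k)| ^ β (σ k) = M
    rw [hM, ← Finset.prod_map Finset.univ σ (fun i => |x i| ^ (β i))]
    apply Finset.prod_subset (Finset.subset_univ _)
    intro i _ hi
    have : β i = 0 := by
      apply hβ2
      intro k hk
      exact hi (Finset.mem_map.mpr ⟨k, Finset.mem_univ _, hk⟩)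
    simp [this]
  have hsum2 : ∑ k, lam k * ((c k / lam k) * y k) = ∑ k, c k * y k := by
    apply Finset.sum_congr rfl
    intro k _
    have h := (hlam k).ne'
    field_simp
  have key : Θ * M ≤ ∑ k, c k * y k := by
    rw [← hsum2, ← hyM, ← hprod]; exact hAM
  have hΘn : 0 ≤ Θ := Finset.prod_nonneg fun k _ => Real.rpow_nonneg
      (div_nonneg (hc k).le (hlam k).le) _
  -- evaluate the polynomial
  have heval : eval x (C (c 0) + (∑ k : Fin r, monomial (Finsupp.single (σ k) (2*d)) (c k.succ))
        + monomial β b') = (∑ k, c k * y k) + b' * ∏ i, x i ^ (β i) := by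
    rw [map_add, map_add, eval_C, map_sum, Fin.sum_univ_succ]
    have h0 : c 0 * y 0 = c 0 := by simp [hy]
    have hsucc : ∀ k : Fin r, eval x (monomial (Finsupp.single (σ k) (2*d)) (c k.succ))
        = c k.succ * y k.succ := by
      intro k
      rw [eval_monomial, Finsupp.prod_single_index (by simp)]
      simp [hy]
    rw [eval_monomial, Finsupp.prod_fintype _ _ (by simp)]
    rw [h0, Finset.sum_congr rfl (fun k _ => hsucc k)]
    try ring
  rw [heval]
  have habs : |b' * ∏ i, x i ^ (β i)| = |b'| * M := by
    rw [abs_mul, hM, Finset.abs_prod]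
    congr 1
    exact Finset.prod_congr rfl fun i _ => (abs_pow _ _)
  have h2 : -(Θ * M) ≤ b' * ∏ i, x i ^ (β i) := by
    have h3 := neg_abs_le (b' * ∏ i, x i ^ (β i))
    rw [habs] at h3
    nlinarith [mul_le_mul_of_nonneg_right hb hMn]
  linarith

lemma isCircuit_monomial {n d : ℕ} (a : Fin n →₀ ℕ) (hev : ∀ i, Even (a i))
    (hdeg : ∑ i, a i ≤ 2 * d) (v : ℝ) : IsCircuit n d (monomial a v) := by
  refine ⟨0, fun _ => ⇑a, ⇑a, fun _ => |v| + 1, v - (|v| + 1), fun _ => 1,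
    Nat.zero_le n, fun _ i => hev i, (haveI : Subsingleton (Fin (0+1)) := Fin.subsingleton_one; affineIndependent_of_subsingleton ℝ _),
    fun _ => by positivity, fun _ => one_pos, by simp, ?_, fun _ => hdeg, ?_⟩
  · intro i
    simp [Fin.sum_univ_one]
  · rw [Fin.sum_univ_one, Finsupp.equivFunOnFinite_symm_coe, ← map_add]
    congr 1
    ring

lemma isCircuit_shape {n d : ℕ} (hd : 1 ≤ d) {r : ℕ} (hr : r ≤ n) (σ : Fin r ↪ Fin n)
    (c : Fin (r+1) → ℝ) (hc : ∀ k, 0 < c k) (lam : Fin (r+1) → ℝ) (hlam : ∀ k, 0 < lam k)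
    (hsum : ∑ k, lam k = 1) (β : Fin n →₀ ℕ)
    (hβ1 : ∀ k : Fin r, ((β (σ k) : ℝ)) = 2 * d * lam k.succ)
    (hβ2 : ∀ i, (∀ k, σ k ≠ i) → β i = 0) (b' : ℝ) :
    IsCircuit n d (C (c 0) + (∑ k : Fin r, monomial (Finsupp.single (σ k) (2*d)) (c k.succ))
        + monomial β b') := by
  classical
  set α : Fin (r+1) → Fin n → ℕ :=
    Fin.cases (fun _ => 0) (fun k i => if σ k = i then 2*d else 0) with hα
  refine ⟨r, α, ⇑β, c, b', lam, hr, ?_, ?_, hc, hlam, hsum, ?_, ?_, ?_⟩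
  · -- even
    intro j i
    induction j using Fin.cases with
    | zero => simp [hα]
    | succ k =>
      simp only [hα, Fin.cases_succ]
      split
      · exact even_two_mul d
      · exact Even.zero
  · -- affine independence
    rw [affineIndependent_iff_of_fintype]
    intro w hw0 hwv
    rw [Finset.univ.weightedVSub_eq_linear_combination hw0] at hwv
    have hzero : ∀ k : Fin r, w k.succ = 0 := by
      intro k
      have hcoord := congrFun hwv (σ k)
      rw [Finset.sum_apply] at hcoord
      have : ∀ j : Fin (r+1), (w j • (fun i => (α j i : ℝ))) (σ k)
          = if j = k.succ then w j * (2*d) else 0 := by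
        intro j
        induction j using Fin.cases with
        | zero =>
          rw [if_neg (Fin.succ_ne_zero k).symm]
          simp [hα]
        | succ k' =>
          simp only [hα, Fin.cases_succ, Pi.smul_apply, smul_eq_mul]
          by_cases h : k' = k
          · subst h
            rw [if_pos rfl, if_pos rfl]
            push_cast
            ring
          · rw [if_neg (fun hh => h (σ.injective hh)), if_neg (fun hh => h (Fin.succ_inj.mp hh))]
            simp
      rw [Finset.sum_congr rfl (fun j _ => this j), Finset.sum_ite_eq' Finset.univ k.succ
        (fun j => w j * (2*d)), if_pos (Finset.mem_univ _)] at hcoord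
      have h2d : (0:ℝ) < 2 * d := by positivity
      exact (mul_eq_zero.mp hcoord).resolve_right (by positivity)
    intro j
    induction j using Fin.cases with
    | zero =>
      rw [Fin.sum_univ_succ] at hw0
      rw [Finset.sum_congr rfl (fun k (_ : k ∈ Finset.univ) => hzero k)] at hw0
      simpa using hw0
    | succ k => exact hzero k
  · -- weights
    intro i
    rw [Fin.sum_univ_succ]
    have h0 : lam 0 * ((α 0 i : ℕ) : ℝ) = 0 := by simp [hα]
    by_cases hi : ∃ k, σ k = i
    · obtain ⟨k0, hk0⟩ := hi
      have : ∑ k : Fin r, lam k.succ * ((α k.succ i : ℕ) : ℝ) = lam k0.succ * (2*d) := by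
        rw [Finset.sum_eq_single k0]
        · simp only [hα, Fin.cases_succ, if_pos hk0]
          push_cast; ring
        · intro k _ hk
          have : σ k ≠ i := fun hh => hk (σ.injective (hh.trans hk0.symm))
          simp [hα, this]
        · simp
      rw [h0, this, zero_add, ← hk0, hβ1 k0]
      ring
    · push_neg at hi
      have hβi : β i = 0 := hβ2 i hi
      have : ∑ k : Fin r, lam k.succ * ((α k.succ i : ℕ) : ℝ) = 0 := by
        apply Finset.sum_eq_zero
        intro k _
        simp [hα, hi k]
      rw [h0, this, hβi]
      simp
  · -- degree
    intro j
    induction j using Fin.cases with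
    | zero => simp [hα]
    | succ k =>
      simp only [hα, Fin.cases_succ]
      rw [Finset.sum_ite_eq Finset.univ (σ k) (fun _ => 2*d), if_pos (Finset.mem_univ _)]
  · -- polynomial identity
    rw [Fin.sum_univ_succ, Finsupp.equivFunOnFinite_symm_coe]
    have h0 : (Finsupp.equivFunOnFinite.symm (α 0) : Fin n →₀ ℕ) = 0 := by
      ext i
      simp [hα]
    have hk : ∀ k : Fin r, (Finsupp.equivFunOnFinite.symm (α k.succ) : Fin n →₀ ℕ)
        = Finsupp.single (σ k) (2*d) := by
      intro k
      ext i
      simp only [hα, Fin.cases_succ, Finsupp.coe_equivFunOnFinite_symm,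
        Finsupp.single_apply]
    have hsum2 : ∑ k : Fin r, monomial (Finsupp.equivFunOnFinite.symm (α k.succ)) (c k.succ)
        = ∑ k : Fin r, monomial (Finsupp.single (σ k) (2*d)) (c k.succ) :=
      Finset.sum_congr rfl (fun k _ => by rw [hk k])
    rw [h0, hsum2, ← MvPolynomial.C_apply]


/-- Explicit perturbation estimate from the proof of full-dimensionality of
the SONC cone: for the interior SONC polynomial `f = Σ f_j` (with full support in
`Δ_{n,2d}`) and any nonnegative `g` of degree `≤ 2d`, the explicit
`ε = min δ/(2|g_α|)` with `δ = min (Θ(f_j) − |f_{β(j)}|)` yields `f + ε·g ∈ C_{n,2d}`. -/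
theorem interior_sonc_perturbation (n d s : ℕ) (hn : 1 ≤ n) (hd : 1 ≤ d) (hs : 0 < s)
    (r : Fin s → ℕ) (hr : ∀ j, r j ≤ n)
    (σ : (j : Fin s) → Fin (r j) ↪ Fin n)
    (c : (j : Fin s) → Fin (r j + 1) → ℝ) (hc : ∀ j k, 0 < c j k)
    (lam : (j : Fin s) → Fin (r j + 1) → ℝ) (hlam : ∀ j k, 0 < lam j k)
    (hlamsum : ∀ j, ∑ k, lam j k = 1)
    (b : Fin s → ℝ)
    (β : Fin s → (Fin n →₀ ℕ))
    (hβ1 : ∀ j (k : Fin (r j)), ((β j) (σ j k) : ℝ) = 2 * d * lam j k.succ)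
    (hβ2 : ∀ j i, (∀ k, σ j k ≠ i) → (β j) i = 0)
    (hβinj : Function.Injective β)
    (Θ : Fin s → ℝ) (hΘ : ∀ j, Θ j = ∏ k, (c j k / lam j k) ^ (lam j k))
    (hinner : ∀ j, |b j| < Θ j)
    (fj : Fin s → MvPolynomial (Fin n) ℝ)
    (hfj : ∀ j, fj j = C (c j 0)
        + (∑ k : Fin (r j), monomial (Finsupp.single (σ j k) (2 * d)) (c j k.succ))
        + monomial (β j) (b j))
    (f : MvPolynomial (Fin n) ℝ) (hf : f = ∑ j, fj j)
    (hfull : ∀ α : Fin n →₀ ℕ, (α.sum fun _ m => m) ≤ 2 * d → f.coeff α ≠ 0)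
    (g : MvPolynomial (Fin n) ℝ) (hgdeg : g.totalDegree ≤ 2 * d)
    (hgnn : ∀ x : Fin n → ℝ, 0 ≤ eval x g)
    (hne : (Finset.univ : Finset (Fin s)).Nonempty)
    (δ : ℝ) (hδ : δ = Finset.univ.inf' hne (fun j => Θ j - |b j|))
    (T : Finset (Fin n →₀ ℕ))
    (hT : ∀ a, a ∈ T ↔ a ∈ g.support ∧ a ≠ 0 ∧ ∀ i : Fin n, a ≠ Finsupp.single i (2 * d))
    (hTne : T.Nonempty)
    (ε : ℝ) (hε : ε = T.inf' hTne (fun a => δ / (2 * |g.coeff a|))) :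
    IsSONC n d (f + C ε * g) := by
  classical
  have h2d : (2 * d : ℕ) ≠ 0 := by omega
  have hTg : ∀ a ∈ T, g.coeff a ≠ 0 := fun a ha =>
    MvPolynomial.mem_support_iff.mp ((hT a).mp ha).1
  have hδpos : 0 < δ := by
    rw [hδ, Finset.lt_inf'_iff]
    intro j _
    linarith [hinner j]
  have hεpos : 0 < ε := by
    rw [hε, Finset.lt_inf'_iff]
    intro a ha
    have := abs_pos.mpr (hTg a ha)
    positivity
  -- surjectivity of β onto T
  have hsurj : ∀ a ∈ T, ∃ j, β j = a := by
    intro a ha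
    obtain ⟨hsup, h0, hv⟩ := (hT a).mp ha
    have hadeg : (a.sum fun _ m => m) ≤ 2 * d :=
      le_trans (MvPolynomial.le_totalDegree hsup) hgdeg
    have hfa := hfull a hadeg
    by_contra hno
    push_neg at hno
    apply hfa
    rw [hf, MvPolynomial.coeff_sum]
    apply Finset.sum_eq_zero
    intro j _
    rw [hfj j, MvPolynomial.coeff_add, MvPolynomial.coeff_add]
    have c1 : MvPolynomial.coeff a (C (c j 0) : MvPolynomial (Fin n) ℝ) = 0 := by
      rw [MvPolynomial.coeff_C, if_neg (fun h => h0 h.symm)]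
    have c2 : MvPolynomial.coeff a
        (∑ k : Fin (r j), monomial (Finsupp.single (σ j k) (2 * d)) (c j k.succ)) = 0 := by
      rw [MvPolynomial.coeff_sum]
      apply Finset.sum_eq_zero
      intro k _
      rw [MvPolynomial.coeff_monomial, if_neg (fun h => hv (σ j k) h.symm)]
    have c3 : MvPolynomial.coeff a (monomial (β j) (b j)) = 0 := by
      rw [MvPolynomial.coeff_monomial, if_neg (hno j)]
    rw [c1, c2, c3]
    ring
  -- the perturbed inner coefficients
  set e : Fin s → ℝ := fun j => if β j ∈ T then ε * g.coeff (β j) else 0 with he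
  have hkey : ∀ j, |b j + e j| < Θ j := by
    intro j
    simp only [he]
    split
    case isTrue hmem =>
      have h1 : ε ≤ δ / (2 * |g.coeff (β j)|) := by
        rw [hε]; exact Finset.inf'_le _ hmem
      have h2 : 0 < |g.coeff (β j)| := abs_pos.mpr (hTg _ hmem)
      have h3 : ε * |g.coeff (β j)| ≤ δ / 2 := by
        have := mul_le_mul_of_nonneg_right h1 h2.le
        rwa [div_mul_eq_mul_div, mul_comm (2:ℝ), ← div_div,
          mul_div_cancel_right₀ _ h2.ne'] at this
      have h4 : δ ≤ Θ j - |b j| := by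
        rw [hδ]; exact Finset.inf'_le _ (Finset.mem_univ j)
      calc |b j + ε * g.coeff (β j)| ≤ |b j| + |ε * g.coeff (β j)| := abs_add_le _ _
        _ = |b j| + ε * |g.coeff (β j)| := by rw [abs_mul, abs_of_pos hεpos]
        _ ≤ |b j| + δ / 2 := by linarith
        _ < Θ j := by linarith
    case isFalse => simpa using hinner j
  -- the circuit summands
  set Q1 : Fin s → MvPolynomial (Fin n) ℝ := fun j => fj j + monomial (β j) (e j) with hQ1
  set Q2 : Fin (n + 1) → MvPolynomial (Fin n) ℝ :=
    Fin.cons (C (ε * g.coeff 0)) (fun i : Fin n =>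
      monomial (Finsupp.single i (2 * d)) (ε * g.coeff (Finsupp.single i (2 * d)))) with hQ2
  have hQ1shape : ∀ j, Q1 j = C (c j 0)
      + (∑ k : Fin (r j), monomial (Finsupp.single (σ j k) (2 * d)) (c j k.succ))
      + monomial (β j) (b j + e j) := by
    intro j
    simp only [hQ1]
    rw [hfj j, map_add]
    ring
  refine ⟨s + (n + 1), Fin.append Q1 Q2, ?_, ?_, ?_⟩
  · -- circuits
    intro idx
    induction idx using Fin.addCases with
    | left j =>
      rw [Fin.append_left, hQ1shape j]
      exact isCircuit_shape hd (hr j) (σ j) (c j) (hc j) (lam j) (hlam j) (hlamsum j)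
        (β j) (hβ1 j) (hβ2 j) _
    | right i =>
      rw [Fin.append_right]
      induction i using Fin.cases with
      | zero =>
        rw [hQ2, Fin.cons_zero, MvPolynomial.C_apply]
        exact isCircuit_monomial 0 (fun i => by simp) (by simp) _
      | succ i =>
        rw [hQ2, Fin.cons_succ]
        refine isCircuit_monomial _ (fun i' => ?_) ?_ _
        · rw [Finsupp.single_apply]
          split
          · exact even_two_mul d
          · exact Even.zero
        · have : ∀ i' : Fin n, (Finsupp.single i (2 * d) : Fin n →₀ ℕ) i'
              = if i = i' then 2 * d else 0 := fun i' => Finsupp.single_apply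
          rw [Finset.sum_congr rfl (fun i' _ => this i'),
            Finset.sum_ite_eq Finset.univ i (fun _ => 2 * d), if_pos (Finset.mem_univ _)]
  · -- nonnegativity
    intro idx x
    induction idx using Fin.addCases with
    | left j =>
      rw [Fin.append_left, hQ1shape j]
      exact circuit_eval_nonneg (σ j) (c j) (hc j) (lam j) (hlam j) (hlamsum j)
        (β j) (hβ1 j) (hβ2 j) _ ((hΘ j ▸ hkey j).le) x
    | right i =>
      rw [Fin.append_right]
      induction i using Fin.cases with
      | zero =>
        rw [hQ2, Fin.cons_zero, eval_C]
        exact mul_nonneg hεpos.le (coeff_zero_nonneg g hgnn)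
      | succ i =>
        rw [hQ2, Fin.cons_succ, eval_monomial, Finsupp.prod_single_index (by simp)]
        exact mul_nonneg (mul_nonneg hεpos.le (coeff_vertex_nonneg hd g hgdeg hgnn i))
          ((even_two_mul d).pow_nonneg _)
  · -- the sum identity
    rw [Fin.sum_univ_add]
    simp only [Fin.append_left, Fin.append_right]
    have hsQ1 : ∑ j, Q1 j = f + ∑ j, monomial (β j) (e j) := by
      rw [hQ1, hf, Finset.sum_add_distrib]
    have hsQ2 : ∑ i, Q2 i = C (ε * g.coeff 0)
        + ∑ i : Fin n, monomial (Finsupp.single i (2 * d)) (ε * g.coeff (Finsupp.single i (2 * d))) := by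
      rw [hQ2, Fin.sum_univ_succ, Fin.cons_zero]
      simp only [Fin.cons_succ]
    rw [hsQ1, hsQ2]
    -- it remains to decompose C ε * g
    have hCg : C ε * g = ∑ a ∈ g.support, monomial a (ε * g.coeff a) := by
      conv_lhs => rw [g.as_sum]
      rw [Finset.mul_sum]
      exact Finset.sum_congr rfl fun a _ => MvPolynomial.C_mul_monomial
    set U : Finset (Fin n →₀ ℕ) :=
      insert 0 (Finset.image (fun i : Fin n => Finsupp.single i (2 * d)) Finset.univ) with hU
    have hsub : g.support ⊆ T ∪ U := by
      intro a ha
      by_cases h0 : a = 0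
      · exact Finset.mem_union_right _ (by rw [hU, h0]; exact Finset.mem_insert_self _ _)
      by_cases hv : ∃ i : Fin n, a = Finsupp.single i (2 * d)
      · obtain ⟨i, hi⟩ := hv
        refine Finset.mem_union_right _ ?_
        rw [hU]
        exact Finset.mem_insert_of_mem (Finset.mem_image.mpr ⟨i, Finset.mem_univ _, hi.symm⟩)
      · push_neg at hv
        exact Finset.mem_union_left _ ((hT a).mpr ⟨ha, h0, hv⟩)
    have hdisj : Disjoint T U := by
      rw [Finset.disjoint_left]
      intro a haT haU
      obtain ⟨_, h0, hv⟩ := (hT a).mp haT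
      rw [hU, Finset.mem_insert] at haU
      rcases haU with h | h
      · exact h0 h
      · obtain ⟨i, _, hi⟩ := Finset.mem_image.mp h
        exact hv i hi.symm
    have hext : ∑ a ∈ g.support, monomial a (ε * g.coeff a)
        = ∑ a ∈ T ∪ U, monomial a (ε * g.coeff a) := by
      apply Finset.sum_subset hsub
      intro a _ hnot
      rw [MvPolynomial.notMem_support_iff.mp hnot, mul_zero, map_zero]
    have h0notim : (0 : Fin n →₀ ℕ) ∉
        Finset.image (fun i : Fin n => Finsupp.single i (2 * d)) Finset.univ := by
      rw [Finset.mem_image]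
      rintro ⟨i, _, hi⟩
      exact h2d (Finsupp.single_eq_zero.mp hi)
    have hsumU : ∑ a ∈ U, monomial a (ε * g.coeff a)
        = C (ε * g.coeff 0) + ∑ i : Fin n, monomial (Finsupp.single i (2 * d))
          (ε * g.coeff (Finsupp.single i (2 * d))) := by
      rw [hU, Finset.sum_insert h0notim, Finset.sum_image
        (fun i _ i' _ h => Finsupp.single_left_injective h2d h), MvPolynomial.C_apply]
    have hsumT : ∑ a ∈ T, monomial a (ε * g.coeff a) = ∑ j, monomial (β j) (e j) := by
      have himg : Finset.image β (Finset.univ.filter (fun j => β j ∈ T)) = T := by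
        apply Finset.ext
        intro a
        constructor
        · intro h
          obtain ⟨j, hj, hja⟩ := Finset.mem_image.mp h
          exact hja ▸ (Finset.mem_filter.mp hj).2
        · intro h
          obtain ⟨j, hj⟩ := hsurj a h
          exact Finset.mem_image.mpr ⟨j, Finset.mem_filter.mpr ⟨Finset.mem_univ _, hj ▸ h⟩, hj⟩
      calc ∑ a ∈ T, monomial a (ε * g.coeff a)
          = ∑ a ∈ Finset.image β (Finset.univ.filter (fun j => β j ∈ T)),
              monomial a (ε * g.coeff a) := by rw [himg]
        _ = ∑ j ∈ Finset.univ.filter (fun j => β j ∈ T),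
              monomial (β j) (ε * g.coeff (β j)) :=
            Finset.sum_image (fun i _ i' _ h => hβinj h)
        _ = ∑ j, monomial (β j) (e j) := by
            rw [Finset.sum_filter]
            apply Finset.sum_congr rfl
            intro j _
            simp only [he]
            split
            · rfl
            · rw [map_zero]
    rw [hCg, hext, Finset.sum_union hdisj, hsumT, hsumU]
    ring
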